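/- Let L̃ = |ṽ3^0⟩⟨ṽ1^0| + |ṽ3^1⟩⟨ṽ1^0| + |ṽ3^0⟩⟨ṽ2^0| − |ṽ3^1⟩⟨ṽ2^0| on C^4. The function ρ_t = e^{-2t}|ṽ1^0⟩⟨ṽ1^0| + (1/2)e^{-2t}(e^{2t} − 1)(|ṽ3^0⟩+|ṽ3^1⟩)(⟨ṽ3^0|+⟨ṽ3^1|) solves dρ/dt = L̃ρL̃† − (1/2){L̃†L̃, ρ} with ρ_0 = |ṽ1^0⟩⟨ṽ1^0|, and ⟨ṽ2^0|ρ_t|ṽ2^0⟩ = 0 for all t ≥ 0. -/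

import Mathlib

open Matrix

set_option maxHeartbeats 1600000 in
/-- For L̃ = |ṽ3^0⟩⟨ṽ1^0| + |ṽ3^1⟩⟨ṽ1^0| + |ṽ3^0⟩⟨ṽ2^0| − |ṽ3^1⟩⟨ṽ2^0| on ℂ⁴
(basis ṽ1^0, ṽ2^0, ṽ3^0, ṽ3^1), the family
ρ_t = e^{-2t}|ṽ1^0⟩⟨ṽ1^0| + (1/2)e^{-2t}(e^{2t}−1)(|ṽ3^0⟩+|ṽ3^1⟩)(⟨ṽ3^0|+⟨ṽ3^1|)
solves the Lindblad equation with ρ_0 = |ṽ1^0⟩⟨ṽ1^0|, and ⟨ṽ2^0|ρ_t|ṽ2^0⟩ = 0 for t ≥ 0. -/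
theorem stmt9 :
    let L : Matrix (Fin 4) (Fin 4) ℂ := !![0,0,0,0; 0,0,0,0; 1,1,0,0; 1,-1,0,0]
    let ρ : ℝ → Matrix (Fin 4) (Fin 4) ℂ := fun t =>
      (Real.exp (-2*t) : ℂ) • !![1,0,0,0; 0,0,0,0; 0,0,0,0; 0,0,0,0]
        + ((1/2 : ℂ) * (Real.exp (-2*t) : ℂ) * ((Real.exp (2*t) : ℂ) - 1)) •
          !![0,0,0,0; 0,0,0,0; 0,0,1,1; 0,0,1,1]
    (∀ (t : ℝ) (i j : Fin 4), HasDerivAt (fun s => ρ s i j)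
        ((L * ρ t * Lᴴ - (1/2 : ℂ) • (Lᴴ * L * ρ t + ρ t * (Lᴴ * L))) i j) t) ∧
    ρ 0 = !![1,0,0,0; 0,0,0,0; 0,0,0,0; 0,0,0,0] ∧
    (∀ t : ℝ, 0 ≤ t → ρ t 1 1 = 0) := by
  intro L ρ
  refine ⟨?_, ?_, ?_⟩
  · intro t i j
    have hm : HasDerivAt (fun s : ℝ => Real.exp (-2*s)) ((-2) * Real.exp (-2*t)) t := by
      simpa [mul_comm] using (((hasDerivAt_id t).const_mul (-2)).exp)
    have h1 : HasDerivAt (fun s : ℝ => ((Real.exp (-2*s) : ℝ) : ℂ))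
        (((-2) * Real.exp (-2*t) : ℝ) : ℂ) t := hm.ofReal_comp
    have hp : HasDerivAt (fun s : ℝ => Real.exp (2*s)) (2 * Real.exp (2*t)) t := by
      simpa [mul_comm] using (((hasDerivAt_id t).const_mul (2)).exp)
    have h3 : HasDerivAt (fun s : ℝ => ((Real.exp (2*s) : ℝ) : ℂ))
        ((2 * Real.exp (2*t) : ℝ) : ℂ) t := hp.ofReal_comp
    have hexp : ((Real.exp (-2*t) : ℝ) : ℂ) * ((Real.exp (2*t) : ℝ) : ℂ) = 1 := by
      rw [← Complex.ofReal_mul, ← Real.exp_add]; norm_num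
    have h2 : HasDerivAt
        (fun s : ℝ => (1/2 : ℂ) * ((Real.exp (-2*s) : ℝ) : ℂ) * (((Real.exp (2*s) : ℝ) : ℂ) - 1))
        (((Real.exp (-2*t) : ℝ) : ℂ)) t := by
      have := ((h1.const_mul (1/2 : ℂ)).mul (h3.sub_const 1))
      refine this.congr_deriv ?_
      push_cast
      ring_nf
    have hR : L * ρ t * Lᴴ - (1/2 : ℂ) • (Lᴴ * L * ρ t + ρ t * (Lᴴ * L))
        = (((-2) * Real.exp (-2*t) : ℝ) : ℂ) • (!![1,0,0,0; 0,0,0,0; 0,0,0,0; 0,0,0,0] : Matrix (Fin 4) (Fin 4) ℂ)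
          + ((Real.exp (-2*t) : ℝ) : ℂ) • (!![0,0,0,0; 0,0,0,0; 0,0,1,1; 0,0,1,1] : Matrix (Fin 4) (Fin 4) ℂ) := by
      have hLH : Lᴴ = !![0,0,1,1; 0,0,1,-1; 0,0,0,0; 0,0,0,0] := by
        ext i j
        fin_cases i <;> fin_cases j <;>
          simp [L, Matrix.conjTranspose_apply, Matrix.vecHead, Matrix.vecTail]
      rw [hLH]
      ext i j
      fin_cases i <;> fin_cases j <;>
        simp [ρ, L, Matrix.mul_apply, Fin.sum_univ_four, Matrix.conjTranspose_apply,
          Matrix.vecHead, Matrix.vecTail] <;> push_cast <;> ring_nf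
    rw [hR]
    have heq : (fun s => ρ s i j)
        = fun s : ℝ => ((Real.exp (-2*s) : ℝ) : ℂ) * (!![1,0,0,0; 0,0,0,0; 0,0,0,0; 0,0,0,0] : Matrix (Fin 4) (Fin 4) ℂ) i j
          + ((1/2 : ℂ) * ((Real.exp (-2*s) : ℝ) : ℂ) * (((Real.exp (2*s) : ℝ) : ℂ) - 1)) * (!![0,0,0,0; 0,0,0,0; 0,0,1,1; 0,0,1,1] : Matrix (Fin 4) (Fin 4) ℂ) i j := by
      funext s
      fin_cases i <;> fin_cases j <;>
        simp [ρ, Matrix.add_apply, Matrix.smul_apply, smul_eq_mul, Matrix.vecHead, Matrix.vecTail] <;> ring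
    rw [heq, Matrix.add_apply, Matrix.smul_apply, Matrix.smul_apply, smul_eq_mul, smul_eq_mul]
    exact (h1.mul_const _).add ((h2.mul_const _))
  · ext i j
    fin_cases i <;> fin_cases j <;> simp [ρ]
  · intro t _
    simp [ρ]
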